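/- For any two Hermitian operators A₀, A₁ on a finite-dimensional Hilbert space H with A₀² = A₁² = I, there exists an orthogonal direct-sum decomposition H = ⊕_μ H^μ with dim H^μ ≤ 2 such that both A₀ and A₁ preserve each subspace H^μ (Jordan's lemma). -/

import Mathlib

open scoped InnerProductSpace

theorem jordan_aux {H : Type*} [NormedAddCommGroup H] [InnerProductSpace ℂ H]
    [FiniteDimensional ℂ H]
    (A₀ A₁ : H →ₗ[ℂ] H) (h₀herm : A₀.IsSymmetric) (h₁herm : A₁.IsSymmetric)
    (h₀sq : A₀ ∘ₗ A₀ = LinearMap.id) (h₁sq : A₁ ∘ₗ A₁ = LinearMap.id) :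
    ∀ (m : ℕ) (K : Submodule ℂ H), Module.finrank ℂ K ≤ m →
      (∀ x ∈ K, A₀ x ∈ K) → (∀ x ∈ K, A₁ x ∈ K) →
    ∃ (n : ℕ) (V : Fin n → Submodule ℂ H),
      (∀ i j, i ≠ j → ∀ x ∈ V i, ∀ y ∈ V j, ⟪x, y⟫_ℂ = 0) ∧
      (∀ i, Module.finrank ℂ (V i) ≤ 2) ∧
      (∀ i, ∀ x ∈ V i, A₀ x ∈ V i) ∧
      (∀ i, ∀ x ∈ V i, A₁ x ∈ V i) ∧
      (⨆ i, V i) = K := by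
  have h₀sq' : ∀ x, A₀ (A₀ x) = x := fun x => by simpa using LinearMap.congr_fun h₀sq x
  have h₁sq' : ∀ x, A₁ (A₁ x) = x := fun x => by simpa using LinearMap.congr_fun h₁sq x
  intro m
  induction m with
  | zero =>
    intro K hK _ _
    have : K = ⊥ := Submodule.finrank_eq_zero.mp (Nat.le_zero.mp hK)
    exact ⟨0, Fin.elim0, fun i => i.elim0, fun i => i.elim0, fun i => i.elim0,
      fun i => i.elim0, by simp [this]⟩
  | succ m ih =>
    intro K hK hK₀ hK₁
    by_cases hbot : K = ⊥
    · exact ⟨0, Fin.elim0, fun i => i.elim0, fun i => i.elim0, fun i => i.elim0,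
        fun i => i.elim0, by simp [hbot]⟩
    -- restrict A₀ ∘ A₁ to K and take an eigenvector
    have hmap : ∀ x ∈ K, (A₀ ∘ₗ A₁) x ∈ K := fun x hx => hK₀ _ (hK₁ _ hx)
    haveI : Nontrivial K := Submodule.nontrivial_iff_ne_bot.mpr hbot
    obtain ⟨c, hc⟩ := Module.End.exists_eigenvalue ((A₀ ∘ₗ A₁).restrict hmap)
    obtain ⟨w, hw⟩ := hc.exists_hasEigenvector
    set v : H := (w : H) with hv
    have hvK : v ∈ K := w.2
    have hvne : v ≠ 0 := fun h => hw.2 (Subtype.ext h)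
    have heig : A₀ (A₁ v) = c • v := by
      have := congrArg (Subtype.val) hw.apply_eq_smul
      simpa using this
    -- injectivity of A₀ ∘ A₁
    have hinj : ∀ x y : H, A₀ (A₁ x) = A₀ (A₁ y) → x = y := by
      intro x y h
      have := congrArg (fun z => A₁ (A₀ z)) h
      simpa [h₀sq', h₁sq'] using this
    have hcne : c ≠ 0 := by
      intro h
      apply hvne
      apply hinj v 0
      simp [heig, h]
    have hA₁v : A₁ v = c • A₀ v := by
      have := congrArg A₀ heig
      simpa [h₀sq', map_smul] using this
    have hA₁A₀v : A₁ (A₀ v) = c⁻¹ • v := by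
      apply hinj
      rw [h₁sq', h₀sq', map_smul, map_smul, heig, smul_smul, inv_mul_cancel₀ hcne, one_smul]
    -- the 2-dimensional invariant subspace
    set W : Submodule ℂ H := Submodule.span ℂ {v, A₀ v} with hW
    have hvW : v ∈ W := Submodule.subset_span (by simp)
    have hA₀vW : A₀ v ∈ W := Submodule.subset_span (by simp)
    have hWK : W ≤ K := by
      rw [hW, Submodule.span_le]
      rintro x (rfl | rfl)
      · exact hvK
      · exact hK₀ _ hvK
    have hWA₀ : ∀ x ∈ W, A₀ x ∈ W := by
      intro x hx
      induction hx using Submodule.span_induction with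
      | mem x hx =>
        rcases hx with rfl | rfl
        · exact hA₀vW
        · rw [h₀sq']; exact hvW
      | zero => simp
      | add x y _ _ hx hy => rw [map_add]; exact W.add_mem hx hy
      | smul a x _ hx => rw [map_smul]; exact W.smul_mem a hx
    have hWA₁ : ∀ x ∈ W, A₁ x ∈ W := by
      intro x hx
      induction hx using Submodule.span_induction with
      | mem x hx =>
        rcases hx with rfl | rfl
        · rw [hA₁v]; exact W.smul_mem _ hA₀vW
        · rw [hA₁A₀v]; exact W.smul_mem _ hvW
      | zero => simp
      | add x y _ _ hx hy => rw [map_add]; exact W.add_mem hx hy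
      | smul a x _ hx => rw [map_smul]; exact W.smul_mem a hx
    have hWrank : Module.finrank ℂ W ≤ 2 := by
      classical
      have : Module.finrank ℂ W ≤ ({v, A₀ v} : Set H).toFinset.card :=
        finrank_span_le_card _
      refine this.trans ?_
      simp only [Set.toFinset_insert, Set.toFinset_singleton]
      exact (Finset.card_insert_le _ _).trans (by simp)
    -- the orthogonal complement inside K
    set K' : Submodule ℂ H := Wᗮ ⊓ K with hK'
    have hsup : W ⊔ K' = K := Submodule.sup_orthogonal_inf_of_hasOrthogonalProjection hWK
    have hK'A₀ : ∀ x ∈ K', A₀ x ∈ K' := by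
      rintro x ⟨hx₁, hx₂⟩
      refine ⟨?_, hK₀ _ hx₂⟩
      intro u hu
      rw [← h₀herm u x]
      exact hx₁ _ (hWA₀ _ hu)
    have hK'A₁ : ∀ x ∈ K', A₁ x ∈ K' := by
      rintro x ⟨hx₁, hx₂⟩
      refine ⟨?_, hK₁ _ hx₂⟩
      intro u hu
      rw [← h₁herm u x]
      exact hx₁ _ (hWA₁ _ hu)
    have hK'lt : K' < K := by
      refine lt_of_le_of_ne inf_le_right ?_
      intro h
      apply hvne
      have : v ∈ Wᗮ := (h ▸ hvK : v ∈ K').1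
      exact inner_self_eq_zero.mp (this v hvW)
    have hK'rank : Module.finrank ℂ K' ≤ m := by
      have := Submodule.finrank_lt_finrank_of_lt hK'lt
      omega
    obtain ⟨n, V, horth, hrank, hV₀, hV₁, hsupV⟩ := ih K' hK'rank hK'A₀ hK'A₁
    have hVW : ∀ i, V i ≤ Wᗮ := by
      intro i
      have : V i ≤ K' := le_iSup V i |>.trans hsupV.le
      exact this.trans inf_le_left
    have hcons_sup : (⨆ i, Fin.cons W V i) = W ⊔ ⨆ i, V i := by
      refine le_antisymm (iSup_le fun i => ?_) (sup_le ?_ (iSup_le fun i => ?_))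
      · rcases i.eq_zero_or_eq_succ with rfl | ⟨i, rfl⟩
        · simpa using (le_sup_left : W ≤ W ⊔ ⨆ i, V i)
        · simpa using (le_iSup V i).trans le_sup_right
      · simpa using le_iSup (Fin.cons W V) 0
      · simpa using le_iSup (Fin.cons W V) i.succ
    refine ⟨n + 1, Fin.cons W V, ?_, ?_, ?_, ?_, ?_⟩
    · intro i j hij
      rcases i.eq_zero_or_eq_succ with rfl | ⟨i, rfl⟩ <;>
        rcases j.eq_zero_or_eq_succ with rfl | ⟨j, rfl⟩
      · exact absurd rfl hij
      · intro x hx y hy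
        simp only [Fin.cons_zero] at hx
        simp only [Fin.cons_succ] at hy
        exact (hVW j hy) x hx
      · intro x hx y hy
        simp only [Fin.cons_succ] at hx
        simp only [Fin.cons_zero] at hy
        rw [← inner_conj_symm, (hVW i hx) y hy, map_zero]
      · intro x hx y hy
        simp only [Fin.cons_succ] at hx hy
        exact horth i j (fun h => hij (by rw [h])) x hx y hy
    · intro i
      rcases i.eq_zero_or_eq_succ with rfl | ⟨i, rfl⟩
      · exact hWrank
      · exact hrank i
    · intro i
      rcases i.eq_zero_or_eq_succ with rfl | ⟨i, rfl⟩
      · simpa using hWA₀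
      · simpa using hV₀ i
    · intro i
      rcases i.eq_zero_or_eq_succ with rfl | ⟨i, rfl⟩
      · simpa using hWA₁
      · simpa using hV₁ i
    · rw [hcons_sup, hsupV, hsup]

/-- **Jordan's lemma.** For any two Hermitian involutions `A₀ A₁` on a finite-dimensional
complex inner product space `H`, there is an orthogonal direct-sum decomposition of `H`
into subspaces of dimension at most 2, each invariant under both `A₀` and `A₁`. -/
theorem jordan_lemma {H : Type*} [NormedAddCommGroup H] [InnerProductSpace ℂ H]
    [FiniteDimensional ℂ H]
    (A₀ A₁ : H →ₗ[ℂ] H) (h₀herm : A₀.IsSymmetric) (h₁herm : A₁.IsSymmetric)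
    (h₀sq : A₀ ∘ₗ A₀ = LinearMap.id) (h₁sq : A₁ ∘ₗ A₁ = LinearMap.id) :
    ∃ (n : ℕ) (V : Fin n → Submodule ℂ H),
      DirectSum.IsInternal V ∧
      (∀ i j, i ≠ j → ∀ x ∈ V i, ∀ y ∈ V j, ⟪x, y⟫_ℂ = 0) ∧
      (∀ i, Module.finrank ℂ (V i) ≤ 2) ∧
      (∀ i, ∀ x ∈ V i, A₀ x ∈ V i) ∧
      (∀ i, ∀ x ∈ V i, A₁ x ∈ V i) := by
  obtain ⟨n, V, horth, hrank, hV₀, hV₁, hsup⟩ :=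
    jordan_aux A₀ A₁ h₀herm h₁herm h₀sq h₁sq
      (Module.finrank ℂ (⊤ : Submodule ℂ H)) (⊤ : Submodule ℂ H) le_rfl
      (fun x _ => trivial) (fun x _ => trivial)
  have hfam : OrthogonalFamily ℂ (fun i => V i) fun i => (V i).subtypeₗᵢ :=
    fun i j hij x y => horth i j hij x x.2 y y.2
  exact ⟨n, V, DirectSum.isInternal_submodule_of_iSupIndep_of_iSup_eq_top
      hfam.independent hsup, horth, hrank, hV₀, hV₁⟩
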